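/- arXiv:1012.0208 — 3 statements merged into one kernel-verified Lean document; each statement's English description precedes it below -/
import Mathlib

section
/- Let B = {t ∈ ℂ : |t| < ρ} and E = {z ∈ ℂ : |z| < r, Re z ≥ 0}. If f(t,z) is a function of two complex variables, holomorphic on B × {z : |z| < r, Re z > 0}, continuous on B × E, holomorphic in z across the interior and such that |f(t,z)| = 1 for all t ∈ B and all z ∈ E with Re z = 0, then f(t,z) does not depend on t, i.e., f(t,z) = f(t′,z) for all t, t′ ∈ B and z ∈ E. -/
open Complex Metric Set Filter intervalIntegral
open scoped Topology Interval

set_option maxHeartbeats 1000000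

lemma reflect_diff {g : ℂ → ℂ} {w : ℂ} (hg : DifferentiableAt ℂ g (-(starRingEnd ℂ w))) :
    DifferentiableAt ℂ (fun z => starRingEnd ℂ (g (-(starRingEnd ℂ z)))) w := by
  set u := -(starRingEnd ℂ w) with hu
  obtain ⟨d, hd⟩ : ∃ d, HasDerivAt g d u := ⟨deriv g u, hg.hasDerivAt⟩
  have hslope : Tendsto (slope g u) (𝓝[≠] u) (𝓝 d) := hasDerivAt_iff_tendsto_slope.mp hd
  have hσ : Tendsto (fun z : ℂ => -(starRingEnd ℂ z)) (𝓝[≠] w) (𝓝[≠] u) := by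
    apply tendsto_nhdsWithin_of_tendsto_nhds_of_eventually_within
    · have hcont : Continuous fun z : ℂ => -(starRingEnd ℂ z) := (continuous_conj).neg
      simpa [hu] using (hcont.tendsto w).mono_left nhdsWithin_le_nhds
    · filter_upwards [self_mem_nhdsWithin] with z hz
      simp only [mem_compl_iff, mem_singleton_iff] at hz ⊢
      intro h
      apply hz
      have h2 := congrArg (fun x : ℂ => -(starRingEnd ℂ x)) h
      simpa [hu] using h2
  have key : Tendsto (slope (fun z => starRingEnd ℂ (g (-(starRingEnd ℂ z)))) w)
      (𝓝[≠] w) (𝓝 (starRingEnd ℂ (-d))) := by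
    have h1 : Tendsto (fun z : ℂ => starRingEnd ℂ (-(slope g u (-(starRingEnd ℂ z)))))
        (𝓝[≠] w) (𝓝 (starRingEnd ℂ (-d))) :=
      (continuous_conj.tendsto _).comp ((hslope.comp hσ).neg)
    apply h1.congr'
    filter_upwards [self_mem_nhdsWithin] with z hz
    have hzw : z - w ≠ 0 := sub_ne_zero.mpr hz
    simp only [slope_def_field]
    have hconj : (starRingEnd ℂ) (-(starRingEnd ℂ) z - u) = -(z - w) := by
      rw [hu]
      simp only [map_sub, map_neg, conj_conj]
      ring
    rw [map_neg, map_div₀, map_sub, hconj, div_neg, neg_neg, hu]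
  exact (hasDerivAt_iff_tendsto_slope.mpr key).differentiableAt

/-- Cauchy–Goursat for a rectangle inside the square `Q = Ioo (-s) s ×ℂ Ioo (-s) s`, for a
function continuous on `Q` and differentiable off the vertical line `re = 0`. -/
lemma rectZeroLine {G : ℂ → ℂ} {s : ℝ}
    (hc : ContinuousOn G (Ioo (-s) s ×ℂ Ioo (-s) s))
    (hd : ∀ x ∈ Ioo (-s) s ×ℂ Ioo (-s) s, x.re ≠ 0 → DifferentiableAt ℂ G x)
    (z w : ℂ) (hsub : [[z.re, w.re]] ×ℂ [[z.im, w.im]] ⊆ Ioo (-s) s ×ℂ Ioo (-s) s) :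
    (∫ x : ℝ in z.re..w.re, G (x + z.im * I)) - (∫ x : ℝ in z.re..w.re, G (x + w.im * I)) +
      I • (∫ y : ℝ in z.im..w.im, G (w.re + y * I)) -
      I • (∫ y : ℝ in z.im..w.im, G (z.re + y * I)) = 0 := by
  have key : ∀ p q : ℂ, [[p.re, q.re]] ×ℂ [[p.im, q.im]] ⊆ Ioo (-s) s ×ℂ Ioo (-s) s →
      0 ∉ Ioo (min p.re q.re) (max p.re q.re) →
      (∫ x : ℝ in p.re..q.re, G (x + p.im * I)) - (∫ x : ℝ in p.re..q.re, G (x + q.im * I)) +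
        I • (∫ y : ℝ in p.im..q.im, G (q.re + y * I)) -
        I • (∫ y : ℝ in p.im..q.im, G (p.re + y * I)) = 0 := by
    intro p q hpq h0
    apply integral_boundary_rect_eq_zero_of_differentiable_on_off_countable G p q ∅
      countable_empty (hc.mono hpq)
    intro x hx
    rw [diff_empty] at hx
    rw [mem_reProdIm] at hx
    have hxmem : x ∈ Ioo (-s) s ×ℂ Ioo (-s) s := by
      apply hpq
      rw [mem_reProdIm]
      exact ⟨Ioo_subset_Icc_self hx.1, Ioo_subset_Icc_self hx.2⟩
    refine hd x hxmem fun hre => h0 ?_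
    rw [← hre]; exact hx.1
  by_cases h0 : 0 ∈ Ioo (min z.re w.re) (max z.re w.re)
  · -- split the rectangle along the line `re = 0`
    have h0' : (0:ℝ) ∈ [[z.re, w.re]] := Ioo_subset_Icc_self h0
    have hL : [[z.re, (0:ℝ)]] ⊆ [[z.re, w.re]] := uIcc_subset_uIcc left_mem_uIcc h0'
    have hR : [[(0:ℝ), w.re]] ⊆ [[z.re, w.re]] := uIcc_subset_uIcc h0' right_mem_uIcc
    have hsubL : [[z.re, (0:ℝ)]] ×ℂ [[z.im, w.im]] ⊆ Ioo (-s) s ×ℂ Ioo (-s) s := by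
      refine subset_trans ?_ hsub
      intro u hu; rw [mem_reProdIm] at hu ⊢; exact ⟨hL hu.1, hu.2⟩
    have hsubR : [[(0:ℝ), w.re]] ×ℂ [[z.im, w.im]] ⊆ Ioo (-s) s ×ℂ Ioo (-s) s := by
      refine subset_trans ?_ hsub
      intro u hu; rw [mem_reProdIm] at hu ⊢; exact ⟨hR hu.1, hu.2⟩
    have h₁ := key z ⟨0, w.im⟩ hsubL (by
      simp only [min_def, max_def]
      intro hmem
      rcases hmem with ⟨h1, h2⟩
      split_ifs at h1 h2 <;> linarith)
    have h₂ := key ⟨0, z.im⟩ w hsubR (by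
      simp only [min_def, max_def]
      intro hmem
      rcases hmem with ⟨h1, h2⟩
      split_ifs at h1 h2 <;> linarith)
    -- integrability of the horizontal edges
    have hint : ∀ (c : ℝ), c ∈ [[z.im, w.im]] → ∀ a b : ℝ, [[a, b]] ⊆ [[z.re, w.re]] →
        IntervalIntegrable (fun x : ℝ => G (x + c * I)) MeasureTheory.volume a b := by
      intro c hcmem a b hab
      apply ContinuousOn.intervalIntegrable
      apply hc.comp (Continuous.continuousOn (by continuity))
      intro x hx
      apply hsub
      rw [mem_reProdIm]
      constructor
      · simpa using hab hx
      · simpa using hcmem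
    have e₁ := integral_add_adjacent_intervals
      (hint z.im left_mem_uIcc z.re 0 hL) (hint z.im left_mem_uIcc 0 w.re hR)
    have e₂ := integral_add_adjacent_intervals
      (hint w.im right_mem_uIcc z.re 0 hL) (hint w.im right_mem_uIcc 0 w.re hR)
    rw [← e₁, ← e₂]
    simp only [smul_eq_mul] at h₁ h₂ ⊢
    linear_combination h₁ + h₂
  · exact key z w hsub h0

/-- Morera-type theorem: a function continuous on an open square centered at `0` and
complex-differentiable off the vertical line `re = 0` is differentiable on the square. -/
lemma moreraLine {G : ℂ → ℂ} {s : ℝ}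
    (hc : ContinuousOn G (Ioo (-s) s ×ℂ Ioo (-s) s))
    (hd : ∀ x ∈ Ioo (-s) s ×ℂ Ioo (-s) s, x.re ≠ 0 → DifferentiableAt ℂ G x) :
    DifferentiableOn ℂ G (Ioo (-s) s ×ℂ Ioo (-s) s) := by
  set Q : Set ℂ := Ioo (-s) s ×ℂ Ioo (-s) s with hQdef
  have hQ : IsOpen Q := isOpen_Ioo.reProdIm isOpen_Ioo
  intro z₀ hz₀
  have hz₀' := mem_reProdIm.mp hz₀
  have hs : 0 < s := by
    have h1 := hz₀'.1.1; have h2 := hz₀'.1.2; linarith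
  have h0mem : (0:ℝ) ∈ Ioo (-s) s := ⟨by linarith, hs⟩
  -- integrability helpers
  have hIhor : ∀ c : ℝ, c ∈ Ioo (-s) s → ∀ a b : ℝ, a ∈ Ioo (-s) s → b ∈ Ioo (-s) s →
      IntervalIntegrable (fun x : ℝ => G (x + c * I)) MeasureTheory.volume a b := by
    intro c hcm a b ha hb
    apply ContinuousOn.intervalIntegrable
    apply hc.comp (Continuous.continuousOn (by continuity))
    intro x hx
    rw [mem_reProdIm]
    refine ⟨by simpa using ordConnected_Ioo.uIcc_subset ha hb hx, by simpa using hcm⟩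
  have hIver : ∀ c : ℝ, c ∈ Ioo (-s) s → ∀ a b : ℝ, a ∈ Ioo (-s) s → b ∈ Ioo (-s) s →
      IntervalIntegrable (fun y : ℝ => G (c + y * I)) MeasureTheory.volume a b := by
    intro c hcm a b ha hb
    apply ContinuousOn.intervalIntegrable
    apply hc.comp (Continuous.continuousOn (by continuity))
    intro x hx
    rw [mem_reProdIm]
    refine ⟨by simpa using hcm, by simpa using ordConnected_Ioo.uIcc_subset ha hb hx⟩
  -- the primitive
  set F : ℂ → ℂ := fun p =>
    (∫ x : ℝ in (0:ℝ)..p.re, G (x + ((0:ℝ):ℂ) * I)) +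
      I * ∫ y : ℝ in (0:ℝ)..p.im, G (p.re + y * I) with hFdef
  have hF : ∀ w ∈ Q, HasDerivAt F (G w) w := by
    intro w hw
    have hwm := mem_reProdIm.mp hw
    rw [hasDerivAt_iff_isLittleO, Asymptotics.isLittleO_iff]
    intro c hc0
    have hGc : ContinuousAt G w := hc.continuousAt (hQ.mem_nhds hw)
    obtain ⟨δ₁, hδ₁pos, hδ₁⟩ := Metric.continuousAt_iff.mp hGc (c/2) (half_pos hc0)
    obtain ⟨δ₂, hδ₂pos, hδ₂⟩ := Metric.isOpen_iff.mp hQ w hw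
    have hδpos : 0 < min δ₁ δ₂ / 2 := by positivity
    filter_upwards [Metric.ball_mem_nhds w hδpos] with w' hw'
    have hww' : ‖w' - w‖ < min δ₁ δ₂ / 2 := by
      rw [mem_ball, dist_eq_norm] at hw'; exact hw'
    have hw'Q : w' ∈ Q := hδ₂ (by rw [mem_ball, dist_eq_norm]
                                  calc ‖w' - w‖ < min δ₁ δ₂ / 2 := hww'
                                  _ ≤ δ₂ := by have := min_le_right δ₁ δ₂; linarith)
    have hw'm := mem_reProdIm.mp hw'Q
    -- all points on the L-shaped path are close to w and inside Q
    have hGnear : ∀ u : ℂ, ‖u - w‖ ≤ 2 * ‖w' - w‖ → ‖G u - G w‖ ≤ c / 2 := by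
      intro u hu
      have : dist u w < δ₁ := by
        rw [dist_eq_norm]
        calc ‖u - w‖ ≤ 2 * ‖w' - w‖ := hu
        _ < 2 * (min δ₁ δ₂ / 2) := by linarith
        _ ≤ δ₁ := by have := min_le_left δ₁ δ₂; linarith
      have := hδ₁ this
      rw [dist_eq_norm] at this
      linarith
    -- the rectangle identity
    have hsubrect : [[((⟨w.re, 0⟩:ℂ)).re, w'.re]] ×ℂ [[((⟨w.re, 0⟩:ℂ)).im, w'.im]] ⊆ Q := by
      intro u hu
      have hu' := mem_reProdIm.mp hu
      rw [mem_reProdIm]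
      exact ⟨ordConnected_Ioo.uIcc_subset hwm.1 hw'm.1 hu'.1,
        ordConnected_Ioo.uIcc_subset h0mem hw'm.2 hu'.2⟩
    have rect := rectZeroLine hc hd ⟨w.re, 0⟩ w' hsubrect
    have eqsplit1 := integral_add_adjacent_intervals
      (hIhor 0 h0mem 0 w.re h0mem hwm.1) (hIhor 0 h0mem w.re w'.re hwm.1 hw'm.1)
    have eqsplit2 := integral_add_adjacent_intervals
      (hIver w.re hwm.1 0 w.im h0mem hwm.2) (hIver w.re hwm.1 w.im w'.im hwm.2 hw'm.2)
    have hdecomp : F w' - F w = (∫ x : ℝ in w.re..w'.re, G (x + (w'.im:ℂ) * I)) +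
        I * ∫ y : ℝ in w.im..w'.im, G (w.re + (y:ℂ) * I) := by
      simp only [hFdef, smul_eq_mul] at rect ⊢
      linear_combination rect - eqsplit1 - I * eqsplit2
    have int1 : IntervalIntegrable (fun x : ℝ => G (x + (w'.im:ℂ) * I) - G w)
        MeasureTheory.volume w.re w'.re :=
      (hIhor w'.im hw'm.2 w.re w'.re hwm.1 hw'm.1).sub intervalIntegrable_const
    have int2 : IntervalIntegrable (fun y : ℝ => G (w.re + (y:ℂ) * I) - G w)
        MeasureTheory.volume w.im w'.im :=
      (hIver w.re hwm.1 w.im w'.im hwm.2 hw'm.2).sub intervalIntegrable_const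
    have hkey : F w' - F w - (w' - w) • G w =
        (∫ x : ℝ in w.re..w'.re, (G (x + (w'.im:ℂ) * I) - G w)) +
          I * ∫ y : ℝ in w.im..w'.im, (G (w.re + (y:ℂ) * I) - G w) := by
      rw [intervalIntegral.integral_sub (hIhor w'.im hw'm.2 w.re w'.re hwm.1 hw'm.1)
          intervalIntegrable_const,
        intervalIntegral.integral_sub (hIver w.re hwm.1 w.im w'.im hwm.2 hw'm.2)
          intervalIntegrable_const,
        intervalIntegral.integral_const, intervalIntegral.integral_const, hdecomp]
      have hww : w' - w = ((w'.re - w.re : ℝ) : ℂ) + ((w'.im - w.im : ℝ) : ℂ) * I := by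
        simp [Complex.ext_iff]
      rw [hww]
      simp only [smul_eq_mul, Complex.real_smul]
      push_cast
      ring
    rw [hkey]
    -- now estimate
    have hb1 : ‖∫ x : ℝ in w.re..w'.re, (G (x + (w'.im:ℂ) * I) - G w)‖ ≤
        c / 2 * |w'.re - w.re| := by
      apply intervalIntegral.norm_integral_le_of_norm_le_const
      intro x hx
      apply hGnear
      have hxre : |x - w.re| ≤ |w'.re - w.re| := by
        rcases Set.mem_uIoc.mp hx with h | h <;>
          · rw [abs_sub_le_iff]
            constructor <;>
              linarith [le_abs_self (w'.re - w.re), neg_abs_le (w'.re - w.re), h.1, h.2]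
      have him : |w'.im - w.im| ≤ ‖w' - w‖ := by
        have := Complex.abs_im_le_norm (w' - w)
        simpa [Complex.sub_im] using this
      have hre : |w'.re - w.re| ≤ ‖w' - w‖ := by
        have := Complex.abs_re_le_norm (w' - w)
        simpa [Complex.sub_re] using this
      have hdist : ‖(x + (w'.im:ℂ) * I) - w‖ ≤ |x - w.re| + |w'.im - w.im| := by
        have : (x + (w'.im:ℂ) * I) - w = ((x - w.re : ℝ) : ℂ) + ((w'.im - w.im : ℝ):ℂ) * I := by
          simp [Complex.ext_iff]
        rw [this]
        calc ‖((x - w.re : ℝ) : ℂ) + ((w'.im - w.im : ℝ):ℂ) * I‖ ≤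
            ‖((x - w.re : ℝ) : ℂ)‖ + ‖((w'.im - w.im : ℝ):ℂ) * I‖ := norm_add_le _ _
        _ = |x - w.re| + |w'.im - w.im| := by
            simp only [norm_mul, Complex.norm_I, mul_one, Complex.norm_real, Real.norm_eq_abs]
      linarith
    have hb2 : ‖∫ y : ℝ in w.im..w'.im, (G (w.re + (y:ℂ) * I) - G w)‖ ≤
        c / 2 * |w'.im - w.im| := by
      apply intervalIntegral.norm_integral_le_of_norm_le_const
      intro y hy
      apply hGnear
      have hyim : |y - w.im| ≤ |w'.im - w.im| := by
        rcases Set.mem_uIoc.mp hy with h | h <;>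
          · rw [abs_sub_le_iff]
            constructor <;>
              linarith [le_abs_self (w'.im - w.im), neg_abs_le (w'.im - w.im), h.1, h.2]
      have him : |w'.im - w.im| ≤ ‖w' - w‖ := by
        have := Complex.abs_im_le_norm (w' - w)
        simpa [Complex.sub_im] using this
      have hdist : ‖(w.re + (y:ℂ) * I) - w‖ ≤ |y - w.im| := by
        have : ((w.re:ℂ) + (y:ℂ) * I) - w = ((y - w.im : ℝ):ℂ) * I := by
          simp [Complex.ext_iff]
        rw [this]
        simp only [norm_mul, Complex.norm_I, mul_one, Complex.norm_real, Real.norm_eq_abs]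
        exact le_rfl
      linarith [norm_nonneg (w' - w)]
    have hre : |w'.re - w.re| ≤ ‖w' - w‖ := by
      have := Complex.abs_re_le_norm (w' - w)
      simpa [Complex.sub_re] using this
    have him : |w'.im - w.im| ≤ ‖w' - w‖ := by
      have := Complex.abs_im_le_norm (w' - w)
      simpa [Complex.sub_im] using this
    calc ‖(∫ x : ℝ in w.re..w'.re, (G (x + (w'.im:ℂ) * I) - G w)) +
        I * ∫ y : ℝ in w.im..w'.im, (G (w.re + (y:ℂ) * I) - G w)‖ ≤
        ‖∫ x : ℝ in w.re..w'.re, (G (x + (w'.im:ℂ) * I) - G w)‖ +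
          ‖I * ∫ y : ℝ in w.im..w'.im, (G (w.re + (y:ℂ) * I) - G w)‖ := norm_add_le _ _
    _ ≤ c / 2 * |w'.re - w.re| + c / 2 * |w'.im - w.im| := by
        rw [norm_mul, Complex.norm_I, one_mul]
        linarith
    _ ≤ c * ‖w' - w‖ := by nlinarith [norm_nonneg (w' - w)]
  -- conclude: G = deriv F is analytic on Q
  have hFd : DifferentiableOn ℂ F Q := fun u hu => (hF u hu).differentiableAt.differentiableWithinAt
  have hFa : AnalyticOnNhd ℂ F Q := hFd.analyticOnNhd hQ
  have hGa : AnalyticAt ℂ G z₀ := by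
    refine (hFa.deriv z₀ hz₀).congr ?_
    filter_upwards [hQ.mem_nhds hz₀] with u hu
    exact (hF u hu).deriv
  exact hGa.differentiableAt.differentiableWithinAt

lemma const_on_axis {ρ r : ℝ} (hρ : 0 < ρ) {f : ℂ → ℂ → ℂ}
    (hcont : ContinuousOn (fun x : ℂ × ℂ => f x.1 x.2)
      (ball (0:ℂ) ρ ×ˢ {z : ℂ | ‖z‖ < r ∧ 0 ≤ z.re}))
    (hholo : ∀ t ∈ ball (0:ℂ) ρ, ∀ z : ℂ, ‖z‖ < r → 0 < z.re →
      AnalyticAt ℂ (fun x : ℂ × ℂ => f x.1 x.2) (t, z))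
    (hmod : ∀ t ∈ ball (0:ℂ) ρ, ∀ z : ℂ, ‖z‖ < r → z.re = 0 →
      ‖f t z‖ = 1)
    {z₀ : ℂ} (hz₀r : ‖z₀‖ < r) (hz₀re : z₀.re = 0) :
    ∀ t ∈ ball (0:ℂ) ρ, f t z₀ = f 0 z₀ := by
  set u : ℂ → ℂ := fun t => f t z₀ with hudef
  set Fam : ℝ → ℂ → ℂ := fun ε t => f t (z₀ + ε) with hFamdef
  have ha : 0 < (r - ‖z₀‖) / 2 := by
    have := norm_nonneg z₀; linarith
  have hzε : ∀ ε : ℝ, 0 ≤ ε → ε ≤ (r - ‖z₀‖) / 2 →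
      ‖z₀ + ε‖ < r ∧ 0 ≤ (z₀ + (ε:ℂ)).re := by
    intro ε h1 h2
    constructor
    · calc ‖z₀ + ε‖ ≤ ‖z₀‖ + ‖(ε:ℂ)‖ := norm_add_le _ _
      _ = ‖z₀‖ + |ε| := by rw [Complex.norm_real, Real.norm_eq_abs]
      _ = ‖z₀‖ + ε := by rw [_root_.abs_of_nonneg h1]
      _ < r := by linarith
    · simp [Complex.add_re, Complex.ofReal_re, hz₀re, h1]
  have hdiff : ∀ᶠ ε in 𝓝[>] (0:ℝ), DifferentiableOn ℂ (Fam ε) (ball (0:ℂ) ρ) := by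
    filter_upwards [Ioo_mem_nhdsGT_of_mem
      (show (0:ℝ) ∈ Ico (0:ℝ) ((r - ‖z₀‖)/2) from ⟨le_rfl, ha⟩)] with ε hε
    intro t ht
    obtain ⟨h1, _⟩ := hzε ε hε.1.le hε.2.le
    have h2 : 0 < (z₀ + (ε:ℂ)).re := by
      simp [Complex.add_re, Complex.ofReal_re, hz₀re, hε.1]
    have h3 := (hholo t ht _ h1 h2).differentiableAt
    exact (h3.comp t ((differentiableAt_id (𝕜 := ℂ) (x := t)).prodMk (differentiableAt_const (z₀ + (ε:ℂ))))).differentiableWithinAt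
  have hlim : TendstoLocallyUniformlyOn Fam u (𝓝[>] (0:ℝ)) (ball (0:ℂ) ρ) := by
    rw [tendstoLocallyUniformlyOn_iff_forall_isCompact isOpen_ball]
    intro K hKsub hK
    rw [Metric.tendstoUniformlyOn_iff]
    intro ε' hε'
    set S : Set ℂ := (fun μ : ℝ => z₀ + μ) '' Icc 0 ((r - ‖z₀‖)/2) with hSdef
    have hSc : IsCompact S := isCompact_Icc.image (by continuity)
    have hCsub : K ×ˢ S ⊆ ball (0:ℂ) ρ ×ˢ {z : ℂ | ‖z‖ < r ∧ 0 ≤ z.re} := by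
      apply prod_mono hKsub
      rintro _ ⟨μ, hμ, rfl⟩
      exact hzε μ hμ.1 hμ.2
    have hUC := (hK.prod hSc).uniformContinuousOn_of_continuous (hcont.mono hCsub)
    rw [Metric.uniformContinuousOn_iff] at hUC
    obtain ⟨δ, hδpos, hδ⟩ := hUC ε' hε'
    have hmin : (0:ℝ) ∈ Ico (0:ℝ) (min δ ((r - ‖z₀‖)/2)) :=
      ⟨le_rfl, lt_min hδpos ha⟩
    filter_upwards [Ioo_mem_nhdsGT_of_mem hmin] with μ hμ t ht
    have hμa : μ ≤ (r - ‖z₀‖)/2 := (lt_of_lt_of_le hμ.2 (min_le_right _ _)).le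
    have hp : ((t, z₀) : ℂ × ℂ) ∈ K ×ˢ S :=
      ⟨ht, ⟨0, ⟨le_rfl, ha.le⟩, by simp⟩⟩
    have hq : ((t, z₀ + (μ:ℂ)) : ℂ × ℂ) ∈ K ×ˢ S :=
      ⟨ht, ⟨μ, ⟨hμ.1.le, hμa⟩, rfl⟩⟩
    have hdlt : dist ((t, z₀) : ℂ × ℂ) (t, z₀ + (μ:ℂ)) < δ := by
      rw [Prod.dist_eq]
      have : dist z₀ (z₀ + (μ:ℂ)) = |μ| := by
        rw [Complex.dist_eq]
        simp [Complex.norm_real]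
      rw [dist_self, this]
      apply max_lt hδpos
      rw [_root_.abs_of_nonneg hμ.1.le]
      exact lt_of_lt_of_le hμ.2 (min_le_left _ _)
    have hfin : dist (f t z₀) (f t (z₀ + (μ:ℂ))) < ε' := hδ (t, z₀) hp (t, z₀ + (μ:ℂ)) hq hdlt
    exact hfin
  have hu : DifferentiableOn ℂ u (ball (0:ℂ) ρ) := hlim.differentiableOn hdiff isOpen_ball
  have hmax : IsMaxOn (norm ∘ u) (ball (0:ℂ) ρ) 0 := by
    intro t ht
    have h1 : ‖f t z₀‖ = 1 := hmod t ht z₀ hz₀r hz₀re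
    have h2 : ‖f 0 z₀‖ = 1 := hmod 0 (mem_ball_self hρ) z₀ hz₀r hz₀re
    simp only [Function.comp, hudef, h1, h2, le_refl, mem_setOf_eq]
  have heq := Complex.eqOn_of_isPreconnected_of_isMaxOn_norm
    (convex_ball (0:ℂ) ρ).isPreconnected isOpen_ball hu (mem_ball_self hρ) hmax
  intro t ht
  exact heq ht

/-- let `B = {t : |t| < ρ}` and `E = {z : |z| < r, Re z ≥ 0}`.  If
`f(t,z)` is holomorphic in the two complex variables `(t,z)` on
`B × {|z| < r, Re z > 0}`, continuous on `B × E` (holomorphic in `z` across the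
interior), and `|f(t,z)| = 1` for all `t ∈ B` and all `z ∈ E` with `Re z = 0`, then
`f(t,z)` does not depend on `t`: `f(t,z) = f(t',z)` for all `t, t' ∈ B` and `z ∈ E`. -/
theorem no_t_dependence_on_flat_boundary
    (ρ r : ℝ) (hρ : 0 < ρ) (hr : 0 < r) (f : ℂ → ℂ → ℂ)
    (hcont : ContinuousOn (fun x : ℂ × ℂ => f x.1 x.2)
      (ball (0:ℂ) ρ ×ˢ {z : ℂ | ‖z‖ < r ∧ 0 ≤ z.re}))
    (hholo : ∀ t ∈ ball (0:ℂ) ρ, ∀ z : ℂ, ‖z‖ < r → 0 < z.re →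
      AnalyticAt ℂ (fun x : ℂ × ℂ => f x.1 x.2) (t, z))
    (hholo_z : ∀ t ∈ ball (0:ℂ) ρ, ∀ z : ℂ, ‖z‖ < r → 0 < z.re →
      AnalyticAt ℂ (f t) z)
    (hmod : ∀ t ∈ ball (0:ℂ) ρ, ∀ z : ℂ, ‖z‖ < r → z.re = 0 →
      ‖f t z‖ = 1) :
    ∀ t ∈ ball (0:ℂ) ρ, ∀ t' ∈ ball (0:ℂ) ρ, ∀ z : ℂ,
      ‖z‖ < r → 0 ≤ z.re → f t z = f t' z := by
  have axis : ∀ z' : ℂ, ‖z'‖ < r → z'.re = 0 →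
      ∀ t ∈ ball (0:ℂ) ρ, ∀ t' ∈ ball (0:ℂ) ρ, f t z' = f t' z' := by
    intro z' h1 h2 t ht t' ht'
    rw [const_on_axis hρ hcont hholo hmod h1 h2 t ht,
      const_on_axis hρ hcont hholo hmod h1 h2 t' ht']
  intro t ht t' ht' z hzr hzre
  rcases eq_or_lt_of_le hzre with h | h
  · exact axis z hzr h.symm t ht t' ht'
  -- interior case
  set g : ℂ → ℂ := fun z => f t z - f t' z with hgdef
  suffices hsuff : g z = 0 by
    have := sub_eq_zero.mp hsuff; exact this
  have hg0 : ∀ z' : ℂ, ‖z'‖ < r → z'.re = 0 → g z' = 0 := fun z' h1 h2 =>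
    sub_eq_zero.mpr (axis z' h1 h2 t ht t' ht')
  have hga : ∀ z' : ℂ, ‖z'‖ < r → 0 < z'.re → AnalyticAt ℂ g z' := fun z' h1 h2 =>
    (hholo_z t ht z' h1 h2).sub (hholo_z t' ht' z' h1 h2)
  set Eset : Set ℂ := {z : ℂ | ‖z‖ < r ∧ 0 ≤ z.re} with hEdef
  have hgc : ContinuousOn g Eset := by
    have hmk : ∀ τ : ℂ, τ ∈ ball (0:ℂ) ρ → ContinuousOn (fun z => f τ z) Eset := by
      intro τ hτ
      have hmap : MapsTo (fun z : ℂ => ((τ, z) : ℂ × ℂ))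
          Eset (ball (0:ℂ) ρ ×ˢ Eset) := fun z hz => ⟨hτ, hz⟩
      exact hcont.comp (Continuous.continuousOn (by continuity)) hmap
    exact (hmk t ht).sub (hmk t' ht')
  -- the reflected function on the square Q
  set s : ℝ := r / 2 with hsdef
  set Q : Set ℂ := Ioo (-s) s ×ℂ Ioo (-s) s with hQdef
  have hQsub : ∀ z' ∈ Q, ‖z'‖ < r := by
    intro z' hz'
    obtain ⟨h1, h2⟩ := mem_reProdIm.mp hz'
    calc ‖z'‖ ≤ |z'.re| + |z'.im| := Complex.norm_le_abs_re_add_abs_im z'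
    _ < s + s := by
        apply add_lt_add
        · rw [abs_lt]; exact ⟨h1.1, h1.2⟩
        · rw [abs_lt]; exact ⟨h2.1, h2.2⟩
    _ = r := by rw [hsdef]; ring
  set σ : ℂ → ℂ := fun z => -(starRingEnd ℂ z) with hσdef
  have hσmem : ∀ z' : ℂ, ‖σ z'‖ = ‖z'‖ ∧ (σ z').re = -z'.re ∧
      (σ z').im = z'.im := by
    intro z'
    refine ⟨?_, by simp [hσdef], by simp [hσdef]⟩
    simp [hσdef]
  set G : ℂ → ℂ := fun z => if 0 ≤ z.re then g z else starRingEnd ℂ (g (σ z)) with hGdef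
  have hVopen : IsOpen {z : ℂ | ‖z‖ < r ∧ 0 < z.re} := by
    apply IsOpen.inter
    · exact isOpen_lt continuous_norm continuous_const
    · exact isOpen_lt continuous_const Complex.continuous_re
  have hgAt : ∀ z' : ℂ, ‖z'‖ < r → 0 < z'.re → ContinuousAt g z' := by
    intro z' h1 h2
    apply hgc.continuousAt
    rw [_root_.mem_nhds_iff]
    exact ⟨{z : ℂ | ‖z‖ < r ∧ 0 < z.re}, fun u hu => ⟨hu.1, hu.2.le⟩, hVopen, ⟨h1, h2⟩⟩
  -- continuity of G on Q
  have hGc : ContinuousOn G Q := by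
    intro w hw
    rcases lt_trichotomy w.re 0 with hneg | hzero | hpos
    · have hO : IsOpen {z : ℂ | z.re < 0} := isOpen_lt Complex.continuous_re continuous_const
      have hσw : ‖σ w‖ < r ∧ 0 < (σ w).re := by
        obtain ⟨e1, e2, _⟩ := hσmem w
        exact ⟨by rw [e1]; exact hQsub w hw, by rw [e2]; linarith⟩
      have hRc : ContinuousAt (fun z => starRingEnd ℂ (g (σ z))) w := by
        apply ContinuousAt.comp (continuous_conj.continuousAt)
        apply ContinuousAt.comp (hgAt (σ w) hσw.1 hσw.2)
        exact (continuous_conj.neg).continuousAt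
      apply ContinuousAt.continuousWithinAt
      apply hRc.congr
      filter_upwards [hO.mem_nhds hneg] with u hu
      simp only [hGdef]
      rw [if_neg (not_le.mpr hu)]
    · -- on the axis
      have hwr : ‖w‖ < r := hQsub w hw
      have hgted : ContinuousWithinAt g Eset w := hgc w ⟨hwr, hzero.ge⟩
      rw [Metric.continuousWithinAt_iff] at hgted
      have hGw : G w = g w := by simp only [hGdef]; rw [if_pos hzero.ge]
      rw [Metric.continuousWithinAt_iff]
      intro ε hε
      obtain ⟨δ, hδpos, hδ⟩ := hgted ε hε
      refine ⟨δ, hδpos, ?_⟩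
      intro u huQ hud
      by_cases hure : 0 ≤ u.re
      · have h1 : G u = g u := by simp only [hGdef]; rw [if_pos hure]
        rw [h1, hGw]
        exact hδ ⟨hQsub u huQ, hure⟩ hud
      · have h1 : G u = starRingEnd ℂ (g (σ u)) := by simp only [hGdef]; rw [if_neg hure]
        have hσu : σ u ∈ Eset := ⟨by rw [(hσmem u).1]; exact hQsub u huQ,
          by rw [(hσmem u).2.1]; linarith [not_le.mp hure]⟩
        have hσw : σ w = w := by
          simp only [hσdef]
          apply Complex.ext <;> simp [hzero]
        have hσdist : dist (σ u) w < δ := by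
          have e1 : σ u - w = -((starRingEnd ℂ) (u - w)) := by
            simp only [hσdef, Complex.ext_iff, Complex.neg_re, Complex.neg_im, Complex.sub_re,
              Complex.sub_im, Complex.conj_re, Complex.conj_im, hzero]
            constructor <;> ring
          calc dist (σ u) w = ‖σ u - w‖ := Complex.dist_eq _ _
          _ = ‖-((starRingEnd ℂ) (u - w))‖ := by rw [e1]
          _ = ‖(starRingEnd ℂ) (u - w)‖ := norm_neg _
          _ = ‖u - w‖ := Complex.norm_conj _
          _ = dist u w := (Complex.dist_eq u w).symm
          _ < δ := hud
        have hd2 := hδ hσu hσdist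
        rw [h1, hGw]
        have hgw0 : g w = 0 := hg0 w hwr hzero
        rw [hgw0] at hd2 ⊢
        rw [dist_zero_right] at hd2 ⊢
        rwa [Complex.norm_conj]
    · have hO : IsOpen {z : ℂ | 0 < z.re} := isOpen_lt continuous_const Complex.continuous_re
      apply ContinuousAt.continuousWithinAt
      apply (hgAt w (hQsub w hw) hpos).congr
      filter_upwards [hO.mem_nhds hpos] with u hu
      simp only [hGdef]
      rw [if_pos hu.le]
  have hGd : ∀ x ∈ Q, x.re ≠ 0 → DifferentiableAt ℂ G x := by
    intro x hx hxre
    rcases hxre.lt_or_gt with hneg | hpos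
    · have hO : IsOpen {z : ℂ | z.re < 0} := isOpen_lt Complex.continuous_re continuous_const
      have hEq : G =ᶠ[𝓝 x] fun z => starRingEnd ℂ (g (σ z)) := by
        filter_upwards [hO.mem_nhds hneg] with u hu
        simp only [hGdef]
        rw [if_neg (not_le.mpr hu)]
      rw [hEq.differentiableAt_iff]
      apply reflect_diff
      exact (hga (σ x) (by rw [(hσmem x).1]; exact hQsub x hx)
        (by rw [(hσmem x).2.1]; linarith)).differentiableAt
    · have hO : IsOpen {z : ℂ | 0 < z.re} := isOpen_lt continuous_const Complex.continuous_re
      have hEq : G =ᶠ[𝓝 x] g := by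
        filter_upwards [hO.mem_nhds hpos] with u hu
        simp only [hGdef]
        rw [if_pos hu.le]
      rw [hEq.differentiableAt_iff]
      exact (hga x (hQsub x hx) hpos).differentiableAt
  have hQopen : IsOpen Q := isOpen_Ioo.reProdIm isOpen_Ioo
  have hGdiff : DifferentiableOn ℂ G Q := moreraLine hGc hGd
  have hGa : AnalyticOnNhd ℂ G Q := hGdiff.analyticOnNhd hQopen
  have hQconv : Convex ℝ Q := by
    have hhull : convexHull ℝ Q = Q := by
      rw [hQdef, Complex.convexHull_reProdIm, (convex_Ioo _ _).convexHull_eq]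
    exact hhull ▸ convex_convexHull ℝ Q
  have hs0 : 0 < s := by rw [hsdef]; linarith
  have hfreq : ∃ᶠ z' in 𝓝[≠] (0:ℂ), G z' = 0 := by
    have hzero_at : ∀ n : ℕ, G ((((s/2) / n : ℝ) : ℂ) * I) = 0 := by
      intro n
      have hre : (((((s/2) / n : ℝ)) : ℂ) * I).re = 0 := by simp
      have hle : ((s/2) / n : ℝ) ≤ s/2 := by
        rcases Nat.eq_zero_or_pos n with h0 | h0
        · simp [h0]; positivity
        · exact div_le_self (by positivity) (by exact_mod_cast h0)
      have habs : ‖(((((s/2) / n : ℝ)) : ℂ) * I)‖ < r := by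
        rw [norm_mul, Complex.norm_I, mul_one, Complex.norm_real, Real.norm_eq_abs,
          _root_.abs_of_nonneg (by positivity)]
        calc ((s/2) / n : ℝ) ≤ s/2 := hle
        _ < r := by rw [hsdef]; linarith
      have hG : G ((((s/2) / n : ℝ) : ℂ) * I) = g ((((s/2) / n : ℝ) : ℂ) * I) := by
        simp only [hGdef]
        rw [if_pos hre.ge]
      rw [hG]
      exact hg0 _ habs hre
    have h1 : Tendsto (fun n : ℕ => ((s/2) / n : ℝ)) atTop (𝓝 0) :=
      tendsto_const_div_atTop_nhds_zero_nat (s/2)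
    have h2 : Tendsto (fun n : ℕ => (((((s/2) / n : ℝ)) : ℂ) * I)) atTop (𝓝 0) := by
      have := ((Complex.continuous_ofReal.tendsto 0).comp h1).mul_const I
      simpa using this
    have htend : Tendsto (fun n : ℕ => (((((s/2) / n : ℝ)) : ℂ) * I)) atTop (𝓝[≠] (0:ℂ)) := by
      rw [tendsto_nhdsWithin_iff]
      refine ⟨h2, ?_⟩
      filter_upwards [eventually_ge_atTop 1] with n hn
      have hpos : (0:ℝ) < ((s/2) / n : ℝ) := by
        apply div_pos (by positivity)
        exact_mod_cast hn
      simp only [mem_compl_iff, mem_singleton_iff]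
      intro hEqz
      have : ((s/2) / n : ℝ) = 0 := by
        have := congrArg Complex.im hEqz
        simpa using this
      linarith
    exact htend.frequently (Frequently.of_forall hzero_at)
  have hQ0 : (0:ℂ) ∈ Q := by
    rw [hQdef, mem_reProdIm]
    simp only [Complex.zero_re, Complex.zero_im, mem_Ioo]
    constructor <;> constructor <;> linarith
  have hGzero : EqOn G 0 Q :=
    hGa.eqOn_zero_of_preconnected_of_frequently_eq_zero hQconv.isPreconnected hQ0 hfreq
  set V : Set ℂ := {z : ℂ | ‖z‖ < r ∧ 0 < z.re} with hVdef
  have hVconv : Convex ℝ V := by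
    have hVeq : V = ball (0:ℂ) r ∩ {z : ℂ | 0 < z.re} := by
      ext u
      rw [hVdef]
      simp [mem_ball, Complex.dist_eq]
    rw [hVeq]
    exact (convex_ball (0:ℂ) r).inter (convex_halfSpace_re_gt 0)
  have hVana : AnalyticOnNhd ℂ g V := fun z' hz' => hga z' hz'.1 hz'.2
  have hw₀Q : ((s/2 : ℝ) : ℂ) ∈ Q ∩ {z : ℂ | 0 < z.re} := by
    constructor
    · rw [hQdef, mem_reProdIm]
      simp only [Complex.ofReal_re, Complex.ofReal_im, mem_Ioo]
      refine ⟨⟨by linarith, by linarith⟩, by linarith, by linarith⟩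
    · simp only [mem_setOf_eq, Complex.ofReal_re]
      positivity
  have hnear : g =ᶠ[𝓝 ((s/2 : ℝ) : ℂ)] 0 := by
    have hopen : IsOpen (Q ∩ {z : ℂ | 0 < z.re}) :=
      hQopen.inter (isOpen_lt continuous_const Complex.continuous_re)
    filter_upwards [hopen.mem_nhds hw₀Q] with u hu
    have hGu : G u = g u := by
      simp only [hGdef]
      rw [if_pos hu.2.le]
    rw [← hGu]
    exact hGzero hu.1
  have hw₀V : ((s/2 : ℝ) : ℂ) ∈ V := by
    rw [hVdef]
    refine ⟨?_, by simp only [mem_setOf_eq, Complex.ofReal_re]; positivity⟩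
    rw [Complex.norm_real, Real.norm_eq_abs, _root_.abs_of_nonneg (by positivity)]
    rw [hsdef]; linarith
  have hfin := hVana.eqOn_zero_of_preconnected_of_eventuallyEq_zero
    hVconv.isPreconnected hw₀V hnear
  exact hfin ⟨hzr, h⟩
end

section
/- Let 0 < r, D = {z ∈ ℂ : |z| < r}, ξ ∈ D∖{0}, and let P(z) = (−1/ξ)·((z−ξ)/z)·(1 − z·conj(ξ)/r²)⁻¹ and Q(z) = (−1/ξ)·((z−ξ)/z)·(1 − z·conj(ξ)/r²). Then P(z)·Q(z) = (1/z − 1/ξ)² for all z ∈ D∖{0} (so H(z) := 1/z − 1/ξ satisfies H² = PQ and H − 1/z is regular at 0), and log|P′(ξ)| − log|Q′(ξ)| = 2 log(1/(1 − (|ξ|/r)²)); i.e., the harmonic span s(D) for (D, 0, ξ) equals 2 log(1/(1 − (|ξ|/r)²)). -/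
open Complex Metric Set Filter
open scoped Topology

/-- let `0 < r`, `D = {|z| < r}`, `ξ ∈ D ∖ {0}`, and let
`P(z) = (−1/ξ)·((z−ξ)/z)·(1 − z·conj(ξ)/r²)⁻¹` and
`Q(z) = (−1/ξ)·((z−ξ)/z)·(1 − z·conj(ξ)/r²)`.  Then `P(z)·Q(z) = (1/z − 1/ξ)²` for all
`z ∈ D ∖ {0}` (so `H(z) := 1/z − 1/ξ` satisfies `H² = PQ` and `H − 1/z` is regular at
`0`), and `log|P′(ξ)| − log|Q′(ξ)| = 2 log(1/(1 − (|ξ|/r)²))`; i.e. the harmonic span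
`s(D)` for `(D, 0, ξ)` equals `2 log(1/(1 − (|ξ|/r)²))`. -/
theorem harmonic_span_of_disc (r : ℝ) (hr : 0 < r) (ξ : ℂ)
    (hξ : ξ ∈ ball (0:ℂ) r) (hξ0 : ξ ≠ 0)
    (P Q : ℂ → ℂ)
    (hP : ∀ z : ℂ, z ≠ 0 →
      P z = (-1 / ξ) * ((z - ξ) / z) * (1 - z * (starRingEnd ℂ ξ) / (r:ℂ) ^ 2)⁻¹)
    (hQ : ∀ z : ℂ, z ≠ 0 →
      Q z = (-1 / ξ) * ((z - ξ) / z) * (1 - z * (starRingEnd ℂ ξ) / (r:ℂ) ^ 2)) :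
    (∀ z ∈ ball (0:ℂ) r, z ≠ 0 → P z * Q z = (z⁻¹ - ξ⁻¹) ^ 2) ∧
    ((fun z : ℂ => z⁻¹ - ξ⁻¹ - z⁻¹) = fun _ => -ξ⁻¹) ∧
    Real.log ‖deriv P ξ‖ - Real.log ‖deriv Q ξ‖ =
      2 * Real.log (1 / (1 - (‖ξ‖ / r) ^ 2)) := by
  have hr0 : (r:ℂ) ≠ 0 := by exact_mod_cast hr.ne'
  set c : ℂ := starRingEnd ℂ ξ with hc
  have haξ : ‖ξ‖ < r := by simpa [mem_ball, Complex.dist_eq] using hξ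
  have haξ0 : 0 < ‖ξ‖ := by simpa using hξ0
  -- t = (|ξ|/r)^2
  set t : ℝ := (‖ξ‖ / r) ^ 2 with htdef
  have ht0 : 0 < t := by positivity
  have ht1 : t < 1 := by
    have : ‖ξ‖ / r < 1 := (div_lt_one hr).mpr haξ
    calc t < 1 ^ 2 := by
            apply pow_lt_pow_left₀ this (by positivity)
            norm_num
      _ = 1 := one_pow 2
  have h1t : (0:ℝ) < 1 - t := by linarith
  -- g(ξ) = 1 - t as a complex number
  have hgξ : 1 - ξ * c / (r:ℂ) ^ 2 = ((1 - t : ℝ) : ℂ) := by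
    have : ξ * c = ((‖ξ‖ ^ 2 : ℝ) : ℂ) := by
      rw [hc, Complex.mul_conj]
      norm_cast
      exact (Complex.sq_norm ξ).symm
    rw [this, htdef]
    push_cast
    field_simp
  have hgξ0 : 1 - ξ * c / (r:ℂ) ^ 2 ≠ 0 := by
    rw [hgξ]; exact_mod_cast h1t.ne'
  -- nonvanishing of g on the ball
  have hgz : ∀ z ∈ ball (0:ℂ) r, 1 - z * c / (r:ℂ) ^ 2 ≠ 0 := by
    intro z hz h0
    have h1 : z * c / (r:ℂ) ^ 2 = 1 := by linear_combination -h0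
    have : ‖z * c / (r:ℂ) ^ 2‖ < 1 := by
      rw [norm_div, norm_mul]
      have hzr : ‖z‖ < r := by simpa [mem_ball, Complex.dist_eq] using hz
      have : ‖c‖ = ‖ξ‖ := by simp [hc]
      rw [this]
      have hrr : ‖(r:ℂ) ^ 2‖ = r ^ 2 := by
        rw [norm_pow]; simp [abs_of_pos hr]
      rw [hrr, div_lt_one (by positivity)]
      calc ‖z‖ * ‖ξ‖ < r * r := by
            apply mul_lt_mul'' hzr haξ (by positivity) (by positivity)
        _ = r ^ 2 := (sq r).symm
    rw [h1] at this; simp at this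
  refine ⟨?_, ?_, ?_⟩
  · intro z hz hz0
    rw [hP z hz0, hQ z hz0]
    have hg := hgz z hz
    have hbase : -1 / ξ * ((z - ξ) / z) = z⁻¹ - ξ⁻¹ := by
      rw [inv_sub_inv hz0 hξ0, div_mul_div_comm,
        div_eq_div_iff (mul_ne_zero hξ0 hz0) (mul_ne_zero hz0 hξ0)]
      ring
    calc -1 / ξ * ((z - ξ) / z) * (1 - z * c / (r:ℂ) ^ 2)⁻¹ *
          (-1 / ξ * ((z - ξ) / z) * (1 - z * c / (r:ℂ) ^ 2))
        = (-1 / ξ * ((z - ξ) / z)) ^ 2 *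
            ((1 - z * c / (r:ℂ) ^ 2)⁻¹ * (1 - z * c / (r:ℂ) ^ 2)) := by ring
      _ = (z⁻¹ - ξ⁻¹) ^ 2 := by rw [inv_mul_cancel₀ hg, mul_one, hbase]
  · funext z; ring
  -- derivative part
  · -- local functions near ξ
    set h : ℂ → ℂ := fun z => (-1 / ξ) * z⁻¹ * (1 - z * c / (r:ℂ) ^ 2)⁻¹ with hh
    set k : ℂ → ℂ := fun z => (-1 / ξ) * z⁻¹ * (1 - z * c / (r:ℂ) ^ 2) with hk
    have hdh : DifferentiableAt ℂ h ξ := by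
      apply DifferentiableAt.mul
      · exact (differentiableAt_const _).mul (differentiableAt_inv hξ0)
      · exact ((differentiableAt_const _).sub
          (((differentiableAt_id).mul (differentiableAt_const _)).div_const _)).inv hgξ0
    have hdk : DifferentiableAt ℂ k ξ := by
      apply DifferentiableAt.mul
      · exact (differentiableAt_const _).mul (differentiableAt_inv hξ0)
      · exact (differentiableAt_const _).sub
          (((differentiableAt_id).mul (differentiableAt_const _)).div_const _)
    -- P =ᶠ (z-ξ)*h near ξ
    have hne : ∀ᶠ z in 𝓝 ξ, z ≠ 0 := isOpen_ne.eventually_mem hξ0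
    have hPf : (fun z => P z) =ᶠ[𝓝 ξ] fun z => (z - ξ) * h z := by
      filter_upwards [hne] with z hz
      rw [hP z hz, hh]
      field_simp
    have hQf : (fun z => Q z) =ᶠ[𝓝 ξ] fun z => (z - ξ) * k z := by
      filter_upwards [hne] with z hz
      rw [hQ z hz, hk]
      field_simp
    have hdP : deriv P ξ = h ξ := by
      rw [Filter.EventuallyEq.deriv_eq hPf]
      have h1 : HasDerivAt (fun z : ℂ => z - ξ) 1 ξ := (hasDerivAt_id ξ).sub_const ξ
      have := h1.mul hdh.hasDerivAt
      have := this.deriv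
      exact this.trans (by simp)
    have hdQ : deriv Q ξ = k ξ := by
      rw [Filter.EventuallyEq.deriv_eq hQf]
      have h1 : HasDerivAt (fun z : ℂ => z - ξ) 1 ξ := (hasDerivAt_id ξ).sub_const ξ
      have := (h1.mul hdk.hasDerivAt).deriv
      exact this.trans (by simp)
    have habs : ∀ x : ℂ, ‖(-1/ξ) * ξ⁻¹ * x‖ =
        (‖ξ‖)⁻¹ * (‖ξ‖)⁻¹ * ‖x‖ := by
      intro x
      rw [norm_mul, norm_mul]
      simp [norm_inv]
    have hPval : ‖deriv P ξ‖ =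
        (‖ξ‖)⁻¹ * (‖ξ‖)⁻¹ * (1 - t)⁻¹ := by
      rw [hdP, hh]
      simp only
      rw [hgξ, habs, norm_inv, Complex.norm_real, Real.norm_of_nonneg h1t.le]
    have hQval : ‖deriv Q ξ‖ =
        (‖ξ‖)⁻¹ * (‖ξ‖)⁻¹ * (1 - t) := by
      rw [hdQ, hk]
      simp only
      rw [hgξ, habs, Complex.norm_real, Real.norm_of_nonneg h1t.le]
    rw [hPval, hQval]
    have ha' : (‖ξ‖)⁻¹ ≠ 0 := inv_ne_zero haξ0.ne'
    have e1 : Real.log ((‖ξ‖)⁻¹ * (‖ξ‖)⁻¹ * (1 - t)⁻¹) =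
        -Real.log (‖ξ‖) - Real.log (‖ξ‖) - Real.log (1 - t) := by
      rw [Real.log_mul (mul_ne_zero ha' ha') (inv_ne_zero h1t.ne'),
          Real.log_mul ha' ha']
      simp only [Real.log_inv]
      ring
    have e2 : Real.log ((‖ξ‖)⁻¹ * (‖ξ‖)⁻¹ * (1 - t)) =
        -Real.log (‖ξ‖) - Real.log (‖ξ‖) + Real.log (1 - t) := by
      rw [Real.log_mul (mul_ne_zero ha' ha') h1t.ne',
          Real.log_mul ha' ha']
      simp only [Real.log_inv]
      ring
    rw [e1, e2, one_div, Real.log_inv]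
    ring
end

section
/- For every a ∈ ℂ with |a| > 1, the logarithmic area of the closed unit disc centered at a satisfies ∬_{{w : |w−a| ≤ 1}} |w|⁻² dA(w) = π log(|a|²/(|a|²−1)). Consequently, for 0 < |ξ| < 1 and H(z) = 1/z − 1/ξ on the unit disc D = {|z| < 1}, the complement of H(D) in the Riemann sphere is the closed disc {w : |w + 1/ξ| ≤ 1} and its logarithmic area equals E_log(H) = π log(1/(1−|ξ|²)) = (π/2)·s(D), where s(D) = 2 log(1/(1−|ξ|²)) is the harmonic span for (D, 0, ξ). -/
open Complex Metric Set MeasureTheory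

lemma ang (a : ℂ) (ha : 1 < ‖a‖) (r : ℝ) (h0 : 0 < r) (h1 : r ≤ 1) :
    ∫ θ in (0:ℝ)..(2*Real.pi),
      ((‖a + r * Complex.exp (θ * Complex.I)‖)^2)⁻¹
      = 2*Real.pi/((‖a‖)^2 - r^2) := by
  have ha0 : a ≠ 0 := by intro h; simp [h] at ha; linarith
  have hca : (starRingEnd ℂ) a ≠ 0 := by simpa using ha0
  have hr0 : (r:ℂ) ≠ 0 := by exact_mod_cast h0.ne'
  set p : ℂ := -a / r with hp
  set q : ℂ := -(r:ℂ) / (starRingEnd ℂ) a with hq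
  have hA : (0:ℝ) < (‖a‖)^2 - r^2 := by nlinarith [ha, h1, h0]
  have habsp : 1 < ‖p‖ := by
    rw [hp, norm_div, norm_neg, Complex.norm_real, Real.norm_eq_abs, abs_of_pos h0]
    rw [lt_div_iff₀ h0]; nlinarith
  have habsq : ‖q‖ < 1 := by
    rw [hq, norm_div, norm_neg, Complex.norm_real, Real.norm_eq_abs, Complex.norm_conj, abs_of_pos h0]
    rw [div_lt_one (by linarith)]; linarith
  -- circle integrability
  have hiq : CircleIntegrable (fun z => (z - q)⁻¹) 0 1 := by
    rw [circleIntegrable_sub_inv_iff]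
    right; intro h; rw [mem_sphere_iff_norm, sub_zero] at h
    simp only [abs_one] at h
    linarith
  have hip : CircleIntegrable (fun z => (z - p)⁻¹) 0 1 := by
    rw [circleIntegrable_sub_inv_iff]
    right; intro h; rw [mem_sphere_iff_norm, sub_zero] at h
    simp only [abs_one] at h
    linarith
  have hqball : q ∈ ball (0:ℂ) 1 := by
    rw [mem_ball, dist_zero_right]; exact habsq
  have hp0 : (∮ z in C(0, 1), (z - p)⁻¹) = 0 := by
    apply Complex.circleIntegral_eq_zero_of_differentiable_on_off_countable zero_le_one
      Set.countable_empty
    · intro z hz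
      apply ContinuousAt.continuousWithinAt
      apply ContinuousAt.inv₀ (by fun_prop)
      intro h
      rw [sub_eq_zero] at h
      rw [mem_closedBall, dist_zero_right] at hz
      rw [h] at hz; linarith
    · intro z hz
      apply DifferentiableAt.inv (by fun_prop)
      intro h
      rw [sub_eq_zero] at h
      have := hz.1
      rw [mem_ball, dist_zero_right] at this
      rw [h] at this; linarith
  have key : (∮ z in C(0, 1), ((z - q)⁻¹ - (z - p)⁻¹)) = 2 * Real.pi * Complex.I := by
    rw [circleIntegral.integral_sub hiq hip,
      circleIntegral.integral_sub_inv_of_mem_ball hqball, hp0, sub_zero]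
  have circdef : (∮ z in C(0, 1), ((z - q)⁻¹ - (z - p)⁻¹))
      = ∫ θ in (0:ℝ)..(2*Real.pi),
        ((((‖a‖)^2 - r^2 : ℝ)) : ℂ) * Complex.I
          * (((((‖a + (r:ℂ) * Complex.exp (θ * Complex.I)‖)^2)⁻¹ : ℝ)) : ℂ) := by
    rw [circleIntegral]
    refine intervalIntegral.integral_congr fun θ _ => ?_
    simp only [deriv_circleMap, circleMap, Complex.ofReal_zero, zero_add,
      Complex.ofReal_one, one_mul]
    set z := Complex.exp (θ * Complex.I) with hzdef
    have habsz : ‖z‖ = 1 := Complex.norm_exp_ofReal_mul_I θ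
    have hz : z ≠ 0 := by
      intro h; rw [h] at habsz; simp at habsz
    have hzz : z * (starRingEnd ℂ) z = 1 := by
      rw [Complex.mul_conj, Complex.normSq_eq_norm_sq, habsz]; norm_num
    have hconjz : (starRingEnd ℂ) z = z⁻¹ :=
      eq_inv_of_mul_eq_one_left (by rw [mul_comm]; exact hzz)
    have hw : a + (r:ℂ) * z ≠ 0 := by
      intro h
      have h2 : ‖a‖ = ‖(r:ℂ) * z‖ := by
        have h3 : a = -((r:ℂ)*z) := by linear_combination h
        rw [h3, norm_neg]
      rw [norm_mul, Complex.norm_real, Real.norm_eq_abs, habsz, abs_of_pos h0, mul_one] at h2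
      linarith
    have hzp : z - p ≠ 0 := by
      intro h; rw [sub_eq_zero] at h
      rw [← h, habsz] at habsp; linarith
    have hzq : z - q ≠ 0 := by
      intro h; rw [sub_eq_zero] at h
      rw [← h, habsz] at habsq; linarith
    have habsw : ((((‖a + (r:ℂ)*z‖)^2 : ℝ)) : ℂ)
        = (a + (r:ℂ)*z) * (starRingEnd ℂ) (a + (r:ℂ)*z) := by
      rw [Complex.mul_conj, Complex.normSq_eq_norm_sq]
    have hconja : (starRingEnd ℂ) (a + (r:ℂ)*z) = (starRingEnd ℂ) a + (r:ℂ) * z⁻¹ := by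
      rw [map_add, map_mul, Complex.conj_ofReal, hconjz]
    have hcw : (starRingEnd ℂ) a + (r:ℂ) * z⁻¹ ≠ 0 := by
      rw [← hconja]; exact star_ne_zero.mpr hw
    have hAc : ((((‖a‖)^2 - r^2 : ℝ)) : ℂ)
        = a * (starRingEnd ℂ) a - (r:ℂ)^2 := by
      rw [Complex.mul_conj, Complex.normSq_eq_norm_sq]; push_cast; ring
    have hd1 : z * (starRingEnd ℂ) a + (r:ℂ) ≠ 0 := by
      have he : z * ((starRingEnd ℂ) a + (r:ℂ) * z⁻¹) = z * (starRingEnd ℂ) a + (r:ℂ) := by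
        field_simp; try ring
      rw [← he]; exact mul_ne_zero hz hcw
    have hd2 : z * (r:ℂ) + a ≠ 0 := by
      intro h; apply hw; linear_combination h
    have e1 : z - q = (z * (starRingEnd ℂ) a + (r:ℂ)) / (starRingEnd ℂ) a := by
      rw [hq]; field_simp; ring
    have e2 : z - p = (z * (r:ℂ) + a) / (r:ℂ) := by
      rw [hp]; field_simp; try ring
    have e3 : (a + (r:ℂ)*z) * ((starRingEnd ℂ) a + (r:ℂ) * z⁻¹)
        = (z * (r:ℂ) + a) * (z * (starRingEnd ℂ) a + (r:ℂ)) / z := by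
      field_simp; try ring
    rw [smul_eq_mul, Complex.ofReal_inv, hAc, habsw, hconja, e1, e2, e3, inv_div, inv_div,
      inv_div]
    field_simp [hd1, hd2]
    ring
  -- pull constants
  set A : ℝ := (‖a‖)^2 - r^2 with hAdef
  have hAne : ((A:ℝ) : ℂ) ≠ 0 := Complex.ofReal_ne_zero.2 hA.ne'
  rw [key] at circdef
  rw [intervalIntegral.integral_const_mul] at circdef
  rw [intervalIntegral.integral_ofReal] at circdef
  have h2 : ((A:ℝ):ℂ) * Complex.I * ((∫ θ in (0:ℝ)..(2*Real.pi),
      ((‖a + (r:ℂ) * Complex.exp (θ * Complex.I)‖)^2)⁻¹ : ℝ) : ℂ)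
      = ((A:ℝ):ℂ) * Complex.I * ((2*Real.pi/A : ℝ) : ℂ) := by
    rw [← circdef]; push_cast; field_simp
  have h3 := mul_left_cancel₀ (mul_ne_zero hAne Complex.I_ne_zero) h2
  have h4 : (∫ θ in (0:ℝ)..(2*Real.pi),
      ((‖a + (r:ℂ) * Complex.exp (θ * Complex.I)‖)^2)⁻¹ : ℝ) = 2*Real.pi/A :=
    Complex.ofReal_inj.mp h3
  exact h4

lemma part1 (a : ℂ) (ha : 1 < ‖a‖) :
    (∫ w in closedBall a 1, ((‖w‖) ^ 2)⁻¹) =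
      Real.pi * Real.log ((‖a‖) ^ 2 / ((‖a‖) ^ 2 - 1)) := by
  have hA1 : 1 < (‖a‖)^2 := by nlinarith
  set f : ℂ → ℝ := (closedBall (0:ℂ) 1).indicator
    (fun w => ((‖a + w‖)^2)⁻¹) with hf
  have step1 : (∫ w in closedBall a 1, ((‖w‖) ^ 2)⁻¹) = ∫ w, f w := by
    calc (∫ w in closedBall a 1, ((‖w‖) ^ 2)⁻¹)
        = ∫ w, (closedBall a 1).indicator (fun w => ((‖w‖)^2)⁻¹) w :=
          (integral_indicator measurableSet_closedBall).symm
      _ = ∫ w, (closedBall a 1).indicator (fun w => ((‖w‖)^2)⁻¹) (a + w) :=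
          (integral_add_left_eq_self _ a).symm
      _ = ∫ w, f w := by
          congr 1; funext w
          by_cases hw : w ∈ closedBall (0:ℂ) 1
          · have hm : a + w ∈ closedBall a 1 := by
              rw [mem_closedBall] at hw ⊢
              simpa [dist_eq_norm, add_sub_cancel_left] using hw
            rw [indicator_of_mem hm, hf, indicator_of_mem hw]
          · have hm : a + w ∉ closedBall a 1 := by
              rw [mem_closedBall] at hw ⊢
              simpa [dist_eq_norm, add_sub_cancel_left] using hw
            rw [indicator_of_notMem hm, hf, indicator_of_notMem hw]
  rw [step1, ← Complex.integral_comp_polarCoord_symm f]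
  set F : ℝ × ℝ → ℝ := fun p => p.1 • f (Complex.polarCoord.symm p) with hF
  have hFapp : ∀ p : ℝ × ℝ, F p = p.1 • f (Complex.polarCoord.symm p) := fun _ => rfl
  have hsymm : ∀ p : ℝ × ℝ,
      Complex.polarCoord.symm p = (p.1 : ℂ) * Complex.exp (p.2 * Complex.I) := by
    intro p
    rw [Complex.polarCoord_symm_apply, Complex.exp_mul_I]
    norm_cast
  set C : ℝ := ((‖a‖ - 1)^2)⁻¹ with hC
  have hC0 : 0 < C := by
    have h1 : 0 < ‖a‖ - 1 := by linarith
    rw [hC]; positivity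
  have hfb : ∀ x : ℂ, |f x| ≤ C := by
    intro x
    rw [hf]
    by_cases hx : x ∈ closedBall (0:ℂ) 1
    · rw [indicator_of_mem hx]
      have hx1 : ‖x‖ ≤ 1 := by
        rw [mem_closedBall, dist_zero_right] at hx; exact hx
      have hax : ‖a‖ - 1 ≤ ‖a + x‖ := by
        have h := norm_add_le (a + x) (-x)
        rw [add_neg_cancel_right, norm_neg] at h
        linarith
      have h0 : (0:ℝ) ≤ ((‖a + x‖)^2)⁻¹ := by positivity
      rw [_root_.abs_of_nonneg h0, hC]
      have hpos : 0 < ‖a‖ - 1 := by linarith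
      gcongr <;> nlinarith
    · rw [indicator_of_notMem hx]
      simpa using hC0.le
  have hm1 : Measurable fun w : ℂ => ((‖a + w‖)^2)⁻¹ :=
    (((continuous_norm.comp (continuous_const.add continuous_id)).pow 2).measurable).inv
  have hfm : Measurable f := hm1.indicator measurableSet_closedBall
  have hFm : Measurable F := by
    have heq2 : F = fun p : ℝ × ℝ => p.1 * f ((p.1 : ℂ) * Complex.exp (p.2 * Complex.I)) := by
      funext p; rw [hFapp p, hsymm p, smul_eq_mul]
    rw [heq2]
    apply Measurable.mul measurable_fst
    apply hfm.comp
    apply Continuous.measurable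
    exact (Complex.continuous_ofReal.comp continuous_fst).mul
      (Complex.continuous_exp.comp
        ((Complex.continuous_ofReal.comp continuous_snd).mul continuous_const))
  have hi2 : IntegrableOn F (Ioc (0:ℝ) 1 ×ˢ Ioc (-Real.pi) Real.pi) := by
    apply Measure.integrableOn_of_bounded (M := C)
    · rw [Measure.volume_eq_prod, Measure.prod_prod, Real.volume_Ioc, Real.volume_Ioc]
      exact ENNReal.mul_ne_top ENNReal.ofReal_ne_top ENNReal.ofReal_ne_top
    · exact hFm.aestronglyMeasurable
    · filter_upwards [ae_restrict_mem (measurableSet_Ioc.prod measurableSet_Ioc)] with p hp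
      obtain ⟨⟨hp0, hp1⟩, -⟩ := hp
      rw [hFapp p]
      have hnorm : ‖p.1 • f (Complex.polarCoord.symm p)‖
          = p.1 * |f (Complex.polarCoord.symm p)| := by
        rw [smul_eq_mul, Real.norm_eq_abs, abs_mul, _root_.abs_of_pos hp0]
      rw [hnorm]
      calc p.1 * |f (Complex.polarCoord.symm p)| ≤ 1 * C :=
            mul_le_mul hp1 (hfb _) (abs_nonneg _) zero_le_one
        _ = C := one_mul C
  have hFvanish : ∀ p : ℝ × ℝ, 1 < p.1 → F p = 0 := by
    intro p hp
    rw [hFapp p]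
    have hnm : Complex.polarCoord.symm p ∉ closedBall (0:ℂ) 1 := by
      rw [mem_closedBall, dist_zero_right, Complex.norm_polarCoord_symm]
      rw [_root_.abs_of_pos (by linarith)]
      linarith
    rw [hf, indicator_of_notMem hnm, smul_zero]
  have hTmeas : MeasurableSet polarCoord.target := by
    rw [polarCoord_target]; exact measurableSet_Ioi.prod measurableSet_Ioo
  have hint : IntegrableOn F polarCoord.target := by
    have heq : polarCoord.target.indicator F
        = (Ioc (0:ℝ) 1 ×ˢ Ioo (-Real.pi) Real.pi).indicator F := by
      funext p
      rw [polarCoord_target]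
      by_cases h1 : p ∈ (Ioc (0:ℝ) 1 ×ˢ Ioo (-Real.pi) Real.pi)
      · have hmem : p ∈ Ioi (0:ℝ) ×ˢ Ioo (-Real.pi) Real.pi := ⟨h1.1.1, h1.2⟩
        rw [indicator_of_mem h1, indicator_of_mem hmem]
      · rw [indicator_of_notMem h1]
        by_cases h2 : p ∈ (Ioi (0:ℝ) ×ˢ Ioo (-Real.pi) Real.pi)
        · rw [indicator_of_mem h2]
          apply hFvanish
          by_contra h3
          push_neg at h3
          exact h1 ⟨⟨h2.1, h3⟩, h2.2⟩
        · rw [indicator_of_notMem h2]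
    apply (integrable_indicator_iff hTmeas).mp
    rw [heq]
    apply (integrable_indicator_iff (measurableSet_Ioc.prod measurableSet_Ioo)).mpr
    exact hi2.mono_set (prod_mono_right Ioo_subset_Ioc_self)
  show (∫ p in polarCoord.target, F p) = _
  rw [polarCoord_target] at hint ⊢
  rw [Measure.volume_eq_prod] at hint ⊢
  rw [setIntegral_prod F hint]
  have hcong : ∀ r ∈ Ioi (0:ℝ), (∫ θ in Ioo (-Real.pi) Real.pi, F (r, θ))
      = (Ioc (0:ℝ) 1).indicator
          (fun r => r * (2*Real.pi/((‖a‖)^2 - r^2))) r := by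
    intro r hr
    rw [mem_Ioi] at hr
    rcases le_or_gt r 1 with h1 | h1
    · have hmem : r ∈ Ioc (0:ℝ) 1 := ⟨hr, h1⟩
      rw [indicator_of_mem hmem]
      have hptw : ∀ θ : ℝ, F (r, θ)
          = r * ((‖a + (r:ℂ) * Complex.exp (θ * Complex.I)‖)^2)⁻¹ := by
        intro θ
        rw [hFapp (r, θ), hsymm (r, θ), smul_eq_mul]
        congr 1
        rw [hf, indicator_of_mem]
        rw [mem_closedBall, dist_zero_right, norm_mul,
          Complex.norm_real, Real.norm_eq_abs, Complex.norm_exp_ofReal_mul_I, mul_one, _root_.abs_of_pos hr]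
        exact h1
      simp_rw [hptw]
      rw [MeasureTheory.integral_const_mul]
      congr 1
      rw [← integral_Ioc_eq_integral_Ioo,
        ← intervalIntegral.integral_of_le (by linarith [Real.pi_pos])]
      have hper : Function.Periodic
          (fun θ : ℝ => ((‖a + (r:ℂ) * Complex.exp (θ * Complex.I)‖)^2)⁻¹)
          (2*Real.pi) := by
        intro θ
        have hexp : Complex.exp ((↑(θ + 2*Real.pi)) * Complex.I)
            = Complex.exp (θ * Complex.I) := by
          push_cast
          rw [add_mul, Complex.exp_add, Complex.exp_two_pi_mul_I, mul_one]
        simp only [hexp]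
      have hshift := hper.intervalIntegral_add_eq (-Real.pi) 0
      rw [zero_add] at hshift
      rw [show -Real.pi + 2*Real.pi = Real.pi by ring] at hshift
      rw [hshift]
      exact ang a ha r hr h1
    · rw [indicator_of_notMem (by rw [mem_Ioc]; push_neg; intro; linarith)]
      have hptw : ∀ θ : ℝ, F (r, θ) = 0 := fun θ => hFvanish (r, θ) h1
      simp only [hptw, integral_zero]
  rw [setIntegral_congr_fun measurableSet_Ioi hcong,
    setIntegral_indicator measurableSet_Ioc,
    Set.inter_eq_right.mpr Ioc_subset_Ioi_self,
    ← intervalIntegral.integral_of_le zero_le_one]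
  have hderiv : ∀ x ∈ uIcc (0:ℝ) 1,
      HasDerivAt (fun r : ℝ => -Real.pi * Real.log ((‖a‖)^2 - r^2))
        (x * (2*Real.pi/((‖a‖)^2 - x^2))) x := by
    intro x hx
    rw [uIcc_of_le zero_le_one, mem_Icc] at hx
    have hpos : 0 < (‖a‖)^2 - x^2 := by nlinarith
    have h1 : HasDerivAt (fun r : ℝ => (‖a‖)^2 - r^2) (-(2*x)) x := by
      simpa using (HasDerivAt.const_sub ((‖a‖)^2) (hasDerivAt_pow 2 x))
    have h2 := (Real.hasDerivAt_log hpos.ne').comp x h1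
    have h3 := h2.const_mul (-Real.pi)
    refine h3.congr_deriv ?_
    ring
  have hcont : IntervalIntegrable
      (fun r : ℝ => r * (2*Real.pi/((‖a‖)^2 - r^2))) volume 0 1 := by
    apply ContinuousOn.intervalIntegrable
    apply ContinuousOn.mul continuousOn_id
    apply ContinuousOn.div continuousOn_const
    · fun_prop
    · intro x hx
      rw [uIcc_of_le zero_le_one, mem_Icc] at hx
      nlinarith
  rw [intervalIntegral.integral_eq_sub_of_hasDerivAt hderiv hcont]
  rw [Real.log_div (by nlinarith) (by nlinarith)]
  norm_num
  ring

lemma part2set (ξ : ℂ) (hξ0 : ξ ≠ 0) (hξ1 : ‖ξ‖ < 1) :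
    (Set.univ : Set ℂ) \ ((fun z : ℂ => z⁻¹ - ξ⁻¹) '' (ball (0:ℂ) 1 \ {0}))
      = closedBall (-ξ⁻¹) 1 := by
  have himg : ((fun z : ℂ => z⁻¹ - ξ⁻¹) '' (ball (0:ℂ) 1 \ {0}))
      = {w : ℂ | 1 < ‖w + ξ⁻¹‖} := by
    ext w
    constructor
    · rintro ⟨z, ⟨hz1, hz0⟩, rfl⟩
      rw [mem_ball, dist_zero_right] at hz1
      rw [mem_singleton_iff] at hz0
      have hz0' : ‖z‖ ≠ 0 := by simpa using hz0
      have hzpos : 0 < ‖z‖ := lt_of_le_of_ne (norm_nonneg z) (Ne.symm hz0')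
      simp only [mem_setOf_eq, sub_add_cancel, norm_inv]
      exact (one_lt_inv₀ hzpos).mpr hz1
    · intro hw
      rw [mem_setOf_eq] at hw
      refine ⟨(w + ξ⁻¹)⁻¹, ⟨?_, ?_⟩, ?_⟩
      · rw [mem_ball, dist_zero_right, norm_inv]
        exact inv_lt_one_of_one_lt₀ hw
      · rw [mem_singleton_iff]
        intro h
        rw [inv_eq_zero] at h
        rw [h, norm_zero] at hw
        linarith
      · have hne : w + ξ⁻¹ ≠ 0 := by
          intro h; rw [h] at hw; simp at hw; linarith
        field_simp; ring
  rw [himg]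
  ext w
  simp only [mem_diff, mem_univ, true_and, mem_setOf_eq, mem_closedBall, not_lt]
  rw [dist_eq_norm]
  constructor
  · intro h; simpa [sub_neg_eq_add] using h
  · intro h; simpa [sub_neg_eq_add] using h

/-- for every `a ∈ ℂ` with `|a| > 1`, the logarithmic area of the
closed unit disc centered at `a` satisfies
`∬_{|w−a| ≤ 1} |w|⁻² dA(w) = π log(|a|²/(|a|²−1))`.  Consequently, for `0 < |ξ| < 1`
and `H(z) = 1/z − 1/ξ` on the unit disc `D`, the complement of `H(D)` in the Riemann
sphere is the closed disc `{w : |w + 1/ξ| ≤ 1}` and its logarithmic area equals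
`E_log(H) = π log(1/(1−|ξ|²)) = (π/2)·s(D)`, where `s(D) = 2 log(1/(1−|ξ|²))` is the
harmonic span for `(D, 0, ξ)`. -/
theorem logarithmic_area_of_disc_complement :
    (∀ a : ℂ, 1 < ‖a‖ →
      (∫ w in closedBall a 1, ((‖w‖) ^ 2)⁻¹) =
        Real.pi * Real.log ((‖a‖) ^ 2 / ((‖a‖) ^ 2 - 1))) ∧
    (∀ ξ : ℂ, ξ ≠ 0 → ‖ξ‖ < 1 →
      ((Set.univ : Set ℂ) \ ((fun z : ℂ => z⁻¹ - ξ⁻¹) '' (ball (0:ℂ) 1 \ {0})) =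
          closedBall (-ξ⁻¹) 1) ∧
      (∫ w in ((Set.univ : Set ℂ) \
          ((fun z : ℂ => z⁻¹ - ξ⁻¹) '' (ball (0:ℂ) 1 \ {0}))),
          ((‖w‖) ^ 2)⁻¹) =
        Real.pi * Real.log (1 / (1 - (‖ξ‖) ^ 2)) ∧
      Real.pi * Real.log (1 / (1 - (‖ξ‖) ^ 2)) =
        Real.pi / 2 * (2 * Real.log (1 / (1 - (‖ξ‖) ^ 2)))) := by
  refine ⟨part1, fun ξ hξ0 hξ1 => ⟨part2set ξ hξ0 hξ1, ?_, by ring⟩⟩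
  rw [part2set ξ hξ0 hξ1]
  have habs : ‖-ξ⁻¹‖ = (‖ξ‖)⁻¹ := by
    rw [norm_neg, norm_inv]
  have hpos : 0 < ‖ξ‖ := norm_pos_iff.mpr hξ0
  have hgt : 1 < ‖-ξ⁻¹‖ := by
    rw [habs]
    exact (one_lt_inv₀ hpos).mpr hξ1
  rw [part1 _ hgt, habs]
  congr 1
  have h1 : (‖ξ‖)^2 ≠ 0 := by positivity
  have h2 : 1 - (‖ξ‖)^2 ≠ 0 := by nlinarith
  field_simp
end
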